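/- For every real polynomial v of degree at most N−2, one has ∫_{−1}^{1} v(τ) L_p'(τ) dτ = 0. -/
import Mathlib


open Polynomial

/-- `lagL τ i` is the `i`-th Lagrange basis polynomial (of degree `N - 1`)
for the nodes `τ 0, …, τ (N-1)`, satisfying `(lagL τ i).eval (τ j) = δᵢⱼ`. -/
noncomputable def lagL {N : ℕ} (τ : Fin N → ℝ) (i : Fin N) : ℝ[X] :=
  Lagrange.basis Finset.univ τ i

/-- `lagLp τ` is the polynomial `L_p(x) = ∏ᵢ (x - τᵢ)`. -/
noncomputable def lagLp {N : ℕ} (τ : Fin N → ℝ) : ℝ[X] :=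
  ∏ i, (X - C (τ i))

/-- The differentiation matrix `D`, with `D i j = L_j'(τ i)`. -/
noncomputable def matD {N : ℕ} (τ : Fin N → ℝ) : Matrix (Fin N) (Fin N) ℝ :=
  fun i j => (derivative (lagL τ j)).eval (τ i)

/-- The vector `D_p`, with `(D_p) i = L_p'(τ i)`. -/
noncomputable def vecDp {N : ℕ} (τ : Fin N → ℝ) : Fin N → ℝ :=
  fun i => (derivative (lagLp τ)).eval (τ i)

/-- Columns `2, …, N+1` (in 1-based numbering) of the augmented differentiation
matrix `D̃ = [D  D_p]`: column `j` (0-based, `j < N - 1`) is column `j + 1` of `D`,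
and the last column is `D_p`. -/
noncomputable def matDtil2 {N : ℕ} (τ : Fin N → ℝ) : Matrix (Fin N) (Fin N) ℝ :=
  fun i j => if h : (j : ℕ) + 1 < N then matD τ i ⟨(j : ℕ) + 1, h⟩ else vecDp τ i

/-- The quadrature rule with nodes `τ` and weights `w` integrates exactly all
polynomials of degree at most `2 * N - 3` over `[-1, 1]`. -/
def IsQuadrature {N : ℕ} (τ : Fin N → ℝ) (w : Fin N → ℝ) : Prop :=
  ∀ p : ℝ[X], p.natDegree ≤ 2 * N - 3 →
    ∑ i, w i * p.eval (τ i) = ∫ t in (-1 : ℝ)..1, p.eval t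

/-- The integration matrix `A` with rows indexed (0-based) by `i : Fin (N-1)`
corresponding to the node `τ (i+1)`: `A i j = ∫_{-1}^{τ (i+1)} L_j(t) dt`. -/
noncomputable def matA {N : ℕ} (τ : Fin N → ℝ) : Matrix (Fin (N - 1)) (Fin N) ℝ :=
  fun i j => ∫ t in (-1 : ℝ)..(τ ⟨(i : ℕ) + 1, by have := i.isLt; omega⟩), (lagL τ j).eval t

/-- The row vector `A_p`, with `(A_p) j = (1/N) ∏_{k ≠ j} 1 / (τ j - τ k)`. -/
noncomputable def rowAp {N : ℕ} (τ : Fin N → ℝ) : Fin N → ℝ :=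
  fun j => (1 / (N : ℝ)) * ∏ k ∈ Finset.univ.erase j, (τ j - τ k)⁻¹

/-- The matrix `Ã` obtained by stacking `A` on top of the row vector `A_p`. -/
noncomputable def matAtil {N : ℕ} (τ : Fin N → ℝ) : Matrix (Fin N) (Fin N) ℝ :=
  fun i j => if h : (i : ℕ) + 1 < N then matA τ ⟨(i : ℕ), by omega⟩ j else rowAp τ j

/-- The adjoint integration matrix `A† = W⁻¹ Aᵀ W_{2:N}`, with columns indexed
(0-based) by `j : Fin (N-1)` corresponding to the node `τ (j+1)`. -/
noncomputable def matAdag {N : ℕ} (τ : Fin N → ℝ) (w : Fin N → ℝ) :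
    Matrix (Fin N) (Fin (N - 1)) ℝ :=
  fun i j => (w i)⁻¹ * matA τ j i * w ⟨(j : ℕ) + 1, by have := j.isLt; omega⟩

/-- `polyM τ k` is the Lagrange basis polynomial (of degree `N - 3`) for the
interior nodes `τ 1, …, τ (N-2)`, satisfying `(polyM τ k).eval (τ m) = δₖₘ`
for interior indices `m`. -/
noncomputable def polyM {N : ℕ} (τ : Fin N → ℝ) (k : Fin N) : ℝ[X] :=
  Lagrange.basis (Finset.univ.filter fun m : Fin N => 0 < (m : ℕ) ∧ (m : ℕ) < N - 1) τ k

/-- The polynomial `λ(x) = ∑ᵢ (A† r)ᵢ Lᵢ(x)`. -/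
noncomputable def lamP {N : ℕ} (τ : Fin N → ℝ) (w : Fin N → ℝ) (r : Fin (N - 1) → ℝ) : ℝ[X] :=
  ∑ i, C ((matAdag τ w).mulVec r i) * lagL τ i

/-- For every polynomial `v` of degree at most `N - 2`,
`∫_{-1}^{1} v(t) L_p'(t) dt = 0`. -/
theorem stmt3 (N : ℕ) (hN : 3 ≤ N) (τ : Fin N → ℝ) (hmono : StrictMono τ)
    (h0 : τ ⟨0, by omega⟩ = -1) (h1 : τ ⟨N - 1, by omega⟩ = 1) (w : Fin N → ℝ) (hw : ∀ i, 0 < w i) (hquad : IsQuadrature τ w) :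
    ∀ v : ℝ[X], v.natDegree ≤ N - 2 →
      (∫ t in (-1 : ℝ)..1, v.eval t * (derivative (lagLp τ)).eval t) = 0 := by
  intro v hv
  -- L_p vanishes at each node
  have hLp_node : ∀ i : Fin N, (lagLp τ).eval (τ i) = 0 := by
    intro i
    simp only [lagLp, eval_prod, eval_sub, eval_X, eval_C]
    exact Finset.prod_eq_zero (Finset.mem_univ i) (by ring)
  have hLpm1 : (lagLp τ).eval (-1) = 0 := by
    rw [← h0]; exact hLp_node _
  have hLp1 : (lagLp τ).eval (1) = 0 := by
    rw [← h1]; exact hLp_node _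
  -- degree of lagLp
  have hdegLp : (lagLp τ).natDegree ≤ N := by
    unfold lagLp
    rw [Polynomial.natDegree_prod_of_monic _ _ (fun i _ => Polynomial.monic_X_sub_C (τ i))]
    simp
  -- quadrature kills v' * Lp
  have hint2 : (∫ t in (-1 : ℝ)..1, ((derivative v) * lagLp τ).eval t) = 0 := by
    rw [← hquad ((derivative v) * lagLp τ)]
    · refine Finset.sum_eq_zero fun i _ => ?_
      rw [eval_mul, hLp_node i]; ring
    · calc ((derivative v) * lagLp τ).natDegree
          ≤ (derivative v).natDegree + (lagLp τ).natDegree := Polynomial.natDegree_mul_le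
        _ ≤ (N - 2 - 1) + N := by
            gcongr
            calc (derivative v).natDegree ≤ v.natDegree - 1 :=
                Polynomial.natDegree_derivative_le v
              _ ≤ N - 2 - 1 := by omega
        _ ≤ 2 * N - 3 := by omega
  -- fundamental theorem for p := v * lagLp
  set p := v * lagLp τ with hp
  have hftc : (∫ t in (-1 : ℝ)..1, (derivative p).eval t) = p.eval 1 - p.eval (-1) := by
    apply intervalIntegral.integral_deriv_eq_sub' (f := fun t => p.eval t)
    · funext x; exact Polynomial.deriv p
    · intro x _; exact p.differentiableAt
    · exact (derivative p).continuous_aeval.continuousOn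
  have hends : p.eval 1 - p.eval (-1) = 0 := by
    simp [hp, eval_mul, hLp1, hLpm1]
  have hder : derivative p = derivative v * lagLp τ + v * derivative (lagLp τ) := by
    rw [hp, derivative_mul]
  have key : (∫ t in (-1 : ℝ)..1, ((derivative v) * lagLp τ).eval t)
      + (∫ t in (-1 : ℝ)..1, (v * derivative (lagLp τ)).eval t) = 0 := by
    rw [← intervalIntegral.integral_add]
    · rw [← hftc] at hends
      rw [← hends]
      congr 1
      funext t
      rw [hder]; simp [eval_add]
    · exact ((derivative v * lagLp τ).continuous_aeval).intervalIntegrable _ _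
    · exact ((v * derivative (lagLp τ)).continuous_aeval).intervalIntegrable _ _
  have : (∫ t in (-1 : ℝ)..1, (v * derivative (lagLp τ)).eval t) = 0 := by
    rw [hint2] at key; linarith
  rw [← this]
  apply intervalIntegral.integral_congr
  intro t _
  simp [eval_mul]
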